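/- Let β ∈ ℂ³ be a unit vector, and let B' ⊆ ℂ³ denote the orthogonal complement of β (a 2-dimensional subspace). Let α, α⊥ ∈ ℂ² be orthonormal, let η₀, η₁, η₂, η₃, η₄ ∈ ℂ² ⊗ B' (i.e., each ηᵢ lies in ℂ² ⊗ ℂ³ and is orthogonal to u ⊗ β for every u ∈ ℂ²). If the five vectors ψ₀ = α⊗β + η₀, ψ₁ = α⊥⊗β + η₁, ψ₂ = η₂, ψ₃ = η₃, ψ₄ = η₄ are pairwise orthogonal and ψ₂, ψ₃, ψ₄ are nonzero, then η₀ = 0 or η₁ = 0. -/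

import Mathlib

local notation "⟪" x ", " y "⟫" => @inner ℂ _ _ x y

/-- The simple tensor `u ⊗ v` in the concrete model `ℂ^m ⊗ ℂ^n ≃ ℂ^(m×n)`. -/
noncomputable def tp {m n : ℕ} (u : EuclideanSpace ℂ (Fin m))
    (v : EuclideanSpace ℂ (Fin n)) : EuclideanSpace ℂ (Fin m × Fin n) :=
  (WithLp.equiv 2 _).symm fun p => u p.1 * v p.2

lemma inner_tp_tp {m n : ℕ} (u u' : EuclideanSpace ℂ (Fin m))
    (v v' : EuclideanSpace ℂ (Fin n)) :
    ⟪tp u v, tp u' v'⟫ = ⟪u, u'⟫ * ⟪v, v'⟫ := by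
  simp only [tp, PiLp.inner_apply, RCLike.inner_apply, WithLp.equiv_symm_apply, PiLp.toLp_apply]
  rw [Fintype.sum_prod_type, Finset.sum_mul_sum]
  congr 1; ext i; congr 1; ext j
  simp [map_mul]; ring

lemma tp_zero_left {m n : ℕ} (v : EuclideanSpace ℂ (Fin n)) :
    tp (0 : EuclideanSpace ℂ (Fin m)) v = 0 := by
  ext p; simp [tp]

/-- Five pairwise orthogonal states in ℂ²⊗ℂ³ of the form α⊗β+η₀, α⊥⊗β+η₁, η₂, η₃, η₄,
with all ηᵢ in ℂ²⊗B' (B' the orthocomplement of β) and η₂,η₃,η₄ nonzero, force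
η₀ = 0 or η₁ = 0. -/
theorem eta_zero_of_five_orthogonal
    (β : EuclideanSpace ℂ (Fin 3)) (hβ : ‖β‖ = 1)
    (α αp : EuclideanSpace ℂ (Fin 2))
    (hα : ‖α‖ = 1) (hαp : ‖αp‖ = 1) (hperp : ⟪α, αp⟫ = 0)
    (η₀ η₁ η₂ η₃ η₄ : EuclideanSpace ℂ (Fin 2 × Fin 3))
    (hB' : ∀ (i : Fin 5) (u : EuclideanSpace ℂ (Fin 2)),
      ⟪tp u β, ![η₀, η₁, η₂, η₃, η₄] i⟫ = 0)
    (ψ : Fin 5 → EuclideanSpace ℂ (Fin 2 × Fin 3))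
    (hψ : ψ = ![tp α β + η₀, tp αp β + η₁, η₂, η₃, η₄])
    (horth : ∀ i j, i ≠ j → ⟪ψ i, ψ j⟫ = 0)
    (h2 : η₂ ≠ 0) (h3 : η₃ ≠ 0) (h4 : η₄ ≠ 0) :
    η₀ = 0 ∨ η₁ = 0 := by
  by_contra hcon
  push_neg at hcon
  obtain ⟨h0, h1⟩ := hcon
  set ηv : Fin 5 → EuclideanSpace ℂ (Fin 2 × Fin 3) := ![η₀, η₁, η₂, η₃, η₄] with hηv
  -- reversed version of hB'
  have hc : ∀ (i : Fin 5) (u : EuclideanSpace ℂ (Fin 2)), ⟪ηv i, tp u β⟫ = 0 := by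
    intro i u
    rw [← inner_conj_symm, hB' i u, map_zero]
  -- the "α-part" of each ψ i
  set γ : Fin 5 → EuclideanSpace ℂ (Fin 2) := ![α, αp, 0, 0, 0] with hγdef
  have hψγ' : ∀ i, ψ i = tp (γ i) β + ηv i := by
    intro i
    subst hψ
    fin_cases i <;> simp [hγdef, hηv, tp_zero_left]
  have hγorth : ∀ i j : Fin 5, i ≠ j → ⟪γ i, γ j⟫ = 0 := by
    intro i j hij
    have hperp' : ⟪αp, α⟫ = 0 := by rw [← inner_conj_symm, hperp, map_zero]
    fin_cases i <;> fin_cases j <;>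
      first
        | exact absurd rfl hij
        | exact hperp
        | exact hperp'
        | simp [hγdef]
  -- pairwise orthogonality of the ηᵢ
  have hηo : ∀ i j : Fin 5, i ≠ j → ⟪ηv i, ηv j⟫ = 0 := by
    intro i j hij
    have h := horth i j hij
    rw [hψγ' i, hψγ' j, inner_add_left, inner_add_right, inner_add_right,
      hB' j (γ i), hc i (γ j), inner_tp_tp, hγorth i j hij, zero_mul] at h
    simpa using h
  have hηnz : ∀ i, ηv i ≠ 0 := by
    intro i; fin_cases i <;> assumption
  -- build a family of 7 pairwise orthogonal nonzero vectors in a 6-dim space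
  set e : Fin 2 → EuclideanSpace ℂ (Fin 2) := fun i => EuclideanSpace.single i 1 with he
  set ξ : (Fin 2 ⊕ Fin 5) → EuclideanSpace ℂ (Fin 2 × Fin 3) :=
    Sum.elim (fun i => tp (e i) β) ηv with hξ
  have hββ : ⟪β, β⟫ = 1 := by
    rw [inner_self_eq_norm_sq_to_K, hβ]; norm_num
  have hξnz : ∀ i, ξ i ≠ 0 := by
    rintro (i | k)
    · intro h
      have h2 : ⟪ξ (Sum.inl i), ξ (Sum.inl i)⟫ = 0 := by rw [h, inner_zero_left]
      rw [hξ, Sum.elim_inl, inner_tp_tp, hββ, mul_one] at h2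
      simp [he, EuclideanSpace.inner_single_left, EuclideanSpace.single_apply] at h2
    · exact hηnz k
  have hξo : ∀ i j, i ≠ j → ⟪ξ i, ξ j⟫ = 0 := by
    rintro (i | k) (j | l) hij
    · have hij' : i ≠ j := fun h => hij (by rw [h])
      rw [hξ]
      simp only [Sum.elim_inl]
      rw [inner_tp_tp]
      simp [he, EuclideanSpace.inner_single_left, EuclideanSpace.single_apply, hij', Ne.symm hij']
    · exact hB' l (e i)
    · exact hc k (e j)
    · exact hηo k l (fun h => hij (by rw [h]))
  have hLI : LinearIndependent ℂ ξ :=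
    linearIndependent_of_ne_zero_of_inner_eq_zero hξnz hξo
  have hcard := hLI.fintype_card_le_finrank
  rw [finrank_euclideanSpace] at hcard
  simp [Fintype.card_sum] at hcard
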